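/- For each increasing sequence {m_n} of positive integers, there exists a sequence s** ∈ Σ₂ and sequences {α_n}, {β_n} of positive integers, both diverging to infinity, such that d(σ^{α_n + r}(s**), σ^r(s**)) ≤ 2^{-m_n} for r = 0, 1, …, n and d(σ^{α_n + β_n}(s**), σ^{β_n}(s**)) ≥ 1 for each n ∈ ℕ. -/

import Mathlib

open Filter Topology

noncomputable def dSigma (s t : ℕ → Fin 2) : ℝ :=
  ∑' k : ℕ, |((s k : ℝ)) - ((t k : ℝ))| / 2 ^ k

def shift (s : ℕ → Fin 2) : ℕ → Fin 2 := fun k => s (k + 1)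

/- Auxiliary: count of trailing one bits. -/
def cto : ℕ → ℕ
  | 0 => 0
  | (n+1) => if n % 2 = 0 then cto ((n+1)/2) + 1 else 0
decreasing_by omega

lemma cto_odd (n : ℕ) : cto (2*n+1) = cto n + 1 := by
  rw [show 2*n+1 = (2*n)+1 from rfl, cto]
  have h1 : (2*n) % 2 = 0 := by omega
  have h2 : (2*n+1)/2 = n := by omega
  rw [if_pos h1, h2]

lemma cto_even (n : ℕ) : cto (2*n) = 0 := by
  match n with
  | 0 => rw [show (2*0 : ℕ) = 0 from rfl, cto]
  | (k+1) =>
    rw [show 2*(k+1) = (2*k+1)+1 from by ring, cto]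
    rw [if_neg (by omega : ¬ (2*k+1) % 2 = 0)]

lemma cto_add_pow (k : ℕ) : ∀ j, j < 2^k - 1 → cto (j + 2^k) = cto j := by
  induction k with
  | zero => intro j hj; omega
  | succ k ih =>
    intro j hj
    have h2 : (2:ℕ)^(k+1) = 2 * 2^k := by ring
    have hk1 : (1:ℕ) ≤ 2^k := Nat.one_le_two_pow
    rcases Nat.even_or_odd j with ⟨a, ha⟩ | ⟨a, ha⟩
    · have e1 : j + 2^(k+1) = 2 * (a + 2^k) := by omega
      have e2 : j = 2 * a := by omega
      rw [e1, e2, cto_even, cto_even]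
    · have e1 : j + 2^(k+1) = 2 * (a + 2^k) + 1 := by omega
      have e2 : j = 2 * a + 1 := by omega
      rw [e1, e2, cto_odd, cto_odd, ih a (by omega)]

lemma cto_pow_sub_one (k : ℕ) : cto (2^k - 1) = k := by
  induction k with
  | zero => rw [show (2^0 - 1 : ℕ) = 0 from rfl, cto]
  | succ k ih =>
    have hk1 : (1:ℕ) ≤ 2^k := Nat.one_le_two_pow
    have e : (2:ℕ)^(k+1) - 1 = 2 * (2^k - 1) + 1 := by
      have : (2:ℕ)^(k+1) = 2 * 2^k := by ring
      omega
    rw [e, cto_odd, ih]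

/- The unpredictable sequence. -/
open Fin.NatCast in
noncomputable def sstar : ℕ → Fin 2 := fun n => (cto n : Fin 2)

lemma sstar_period {j k : ℕ} (hj : j < 2^k - 1) : sstar (j + 2^k) = sstar j := by
  unfold sstar; rw [cto_add_pow k j hj]

lemma sstar_flip (k : ℕ) : sstar (2^(k+1) - 1) ≠ sstar (2^k - 1) := by
  unfold sstar
  rw [cto_pow_sub_one, cto_pow_sub_one]
  intro h
  have h0 := congrArg Fin.val h
  rw [Fin.val_natCast (k+1) 2, Fin.val_natCast k 2] at h0
  omega

lemma abs_sub_fin2_le (a b : Fin 2) : |((a:ℝ)) - (b:ℝ)| ≤ 1 := by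
  fin_cases a <;> fin_cases b <;> norm_num

lemma abs_sub_fin2_eq (a b : Fin 2) (h : a ≠ b) : |((a:ℝ)) - (b:ℝ)| = 1 := by
  fin_cases a <;> fin_cases b <;> simp_all <;> norm_num

lemma term_le (s t : ℕ → Fin 2) (k : ℕ) :
    |((s k : ℝ)) - ((t k : ℝ))| / 2 ^ k ≤ (2⁻¹ : ℝ) ^ k := by
  have h := abs_sub_fin2_le (s k) (t k)
  calc |((s k : ℝ)) - ((t k : ℝ))| / 2 ^ k ≤ 1 / 2 ^ k := by gcongr
    _ = (2⁻¹ : ℝ) ^ k := by rw [one_div, inv_pow]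

lemma summable_geom2 : Summable (fun k : ℕ => (2⁻¹ : ℝ) ^ k) :=
  summable_geometric_of_lt_one (by norm_num) (by norm_num)

lemma summable_dterm (s t : ℕ → Fin 2) :
    Summable (fun k => |((s k : ℝ)) - ((t k : ℝ))| / 2 ^ k) :=
  summable_geom2.of_nonneg_of_le (fun k => by positivity) (term_le s t)

lemma dSigma_le (s t : ℕ → Fin 2) (m : ℕ) (h : ∀ k ≤ m, s k = t k) :
    dSigma s t ≤ (2 : ℝ)⁻¹ ^ m := by
  unfold dSigma
  set u : ℕ → ℝ := fun k => if k ≤ m then 0 else (2⁻¹ : ℝ) ^ k with hu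
  have hsu : Summable u := by
    apply summable_geom2.of_nonneg_of_le (fun k => by positivity)
    intro k; by_cases hk : k ≤ m <;> simp [hu, hk]
  have h1 : (∑' k : ℕ, |((s k : ℝ)) - ((t k : ℝ))| / 2 ^ k) ≤ ∑' k, u k := by
    apply Summable.tsum_le_tsum _ (summable_dterm s t) hsu
    intro k
    by_cases hk : k ≤ m
    · simp [hu, hk, h k hk]
    · simp only [hu, if_neg hk]
      exact term_le s t k
  refine h1.trans_eq ?_
  rw [← Summable.sum_add_tsum_nat_add (m+1) hsu]
  have hzero : ∑ i ∈ Finset.range (m+1), u i = 0 := by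
    apply Finset.sum_eq_zero
    intro i hi
    simp only [Finset.mem_range] at hi
    simp [hu, Nat.lt_succ_iff.mp hi]
  rw [hzero, zero_add]
  have : (fun k => u (k + (m+1))) = fun k => (2⁻¹ : ℝ) ^ (m+1) * (2⁻¹ : ℝ) ^ k := by
    funext k
    simp only [hu, if_neg (by omega : ¬ k + (m+1) ≤ m)]
    rw [pow_add]; ring
  rw [this, tsum_mul_left, tsum_geometric_of_lt_one (by norm_num) (by norm_num)]
  rw [pow_succ]
  ring

lemma dSigma_ge (s t : ℕ → Fin 2) (h : s 0 ≠ t 0) : 1 ≤ dSigma s t := by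
  unfold dSigma
  have h0 : |((s 0 : ℝ)) - ((t 0 : ℝ))| / 2 ^ 0 = 1 := by
    rw [abs_sub_fin2_eq _ _ h]; norm_num
  calc (1:ℝ) = |((s 0 : ℝ)) - ((t 0 : ℝ))| / 2 ^ 0 := h0.symm
    _ ≤ _ := Summable.le_tsum (summable_dterm s t) 0 (fun k _ => by positivity)

lemma shift_iterate (a : ℕ) : ∀ s : ℕ → Fin 2, shift^[a] s = fun k => s (k + a) := by
  induction a with
  | zero => intro s; rfl
  | succ a ih =>
    intro s
    rw [Function.iterate_succ_apply, ih (shift s)]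
    funext k
    show s (k + a + 1) = s (k + (a + 1))
    ring_nf

/-- one-sided version of Lemma 3.1: for each increasing sequence
`{m_n}` of positive integers there are `s** ∈ Σ₂` and sequences `{α_n}, {β_n}` of
positive integers diverging to infinity such that
`d(σ^{α_n+r}(s**), σ^r(s**)) ≤ 2^{-m_n}` for `r = 0,…,n` and
`d(σ^{α_n+β_n}(s**), σ^{β_n}(s**)) ≥ 1` for each `n`. -/
theorem exists_unpredictable_sequence (m : ℕ → ℕ)
    (hmono : StrictMono m) (hpos : ∀ n, 0 < m n) :
    ∃ s : ℕ → Fin 2, ∃ α β : ℕ → ℕ,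
      (∀ n, 0 < α n) ∧ (∀ n, 0 < β n) ∧
      Tendsto α atTop atTop ∧ Tendsto β atTop atTop ∧
      (∀ n, ∀ r ≤ n, dSigma (shift^[α n + r] s) (shift^[r] s) ≤ (2 : ℝ)⁻¹ ^ (m n)) ∧
      (∀ n, 1 ≤ dSigma (shift^[α n + β n] s) (shift^[β n] s)) := by
  have hKlt : ∀ n : ℕ, n + m n + 2 < 2 ^ (n + m n + 2) := fun n => Nat.lt_two_pow_self
  refine ⟨sstar, fun n => 2 ^ (n + m n + 2), fun n => 2 ^ (n + m n + 2) - 1,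
    ?_, ?_, ?_, ?_, ?_, ?_⟩
  · intro n; positivity
  · intro n; have := hKlt n
    show 0 < 2 ^ (n + m n + 2) - 1
    omega
  · apply tendsto_atTop_mono (fun n => ?_) tendsto_id
    have := hKlt n
    show id n ≤ 2 ^ (n + m n + 2)
    simp only [id]; omega
  · apply tendsto_atTop_mono (fun n => ?_) tendsto_id
    have := hKlt n
    show id n ≤ 2 ^ (n + m n + 2) - 1
    simp only [id]; omega
  · intro n r hr
    rw [shift_iterate, shift_iterate]
    apply dSigma_le _ _ (m n)
    intro k hk
    have h1 : k + (2 ^ (n + m n + 2) + r) = (k + r) + 2 ^ (n + m n + 2) := by ring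
    simp only [h1]
    apply sstar_period
    have := hKlt n
    omega
  · intro n
    rw [shift_iterate, shift_iterate]
    apply dSigma_ge
    have h1 := hKlt n
    have h2 : (2:ℕ) ^ (n + m n + 2 + 1) = 2 ^ (n + m n + 2) * 2 := pow_succ 2 _
    have e1 : 0 + (2 ^ (n + m n + 2) + (2 ^ (n + m n + 2) - 1))
        = 2 ^ ((n + m n + 2) + 1) - 1 := by omega
    have e2 : 0 + (2 ^ (n + m n + 2) - 1) = 2 ^ (n + m n + 2) - 1 := by omega
    simp only [e1, e2]
    exact sstar_flip (n + m n + 2)
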